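/- Let a, b ∈ ℂ and let Ψ be the 7×7 complex matrix whose only nonzero entries are Ψ(1,2) = conj(b), Ψ(2,1) = b, Ψ(2,3) = conj(a), Ψ(3,2) = a, Ψ(3,4) = √2·i·conj(b), Ψ(4,3) = −√2·i·b, Ψ(4,5) = √2·i·conj(b), Ψ(5,4) = −√2·i·b, Ψ(5,6) = conj(a), Ψ(6,5) = a, Ψ(6,7) = conj(b), Ψ(7,6) = b. Then the characteristic polynomial of Ψ equals X⁷ − A·X⁵ + (A²/4)·X³ − C·X, where A = 2(|a|² + 3|b|²) and C = 4|b|⁴(|a|² + |b|²). In particular, if (a,b) ≠ (0,0) then 54C/A³ = 27(|a|²|b|⁴ + |b|⁶)/(|a|² + 3|b|²)³, and this quantity equals 1 if and only if a = 0. -/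

import Mathlib

noncomputable section

section Aux
variable {R : Type*} [CommRing R]

lemma d2g (x a1 b1 : R) : Matrix.det !![x, a1; b1, x] = x^2 - (a1*b1) := by
  simp [Matrix.det_fin_two]; ring

lemma d3g (x a1 a2 b1 b2 : R) : Matrix.det !![x, a1, 0; b1, x, a2; 0, b2, x]
    = x^3 - ((a1*b1) + (a2*b2))*x := by
  simp [Matrix.det_fin_three, Matrix.vecHead, Matrix.vecTail]; ring

lemma c3g (x b a2 a3 b3 : R) : Matrix.det !![b, a2, 0; 0, x, a3; 0, b3, x]
    = b * (x^2 - (a3*b3)) := by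
  simp [Matrix.det_fin_three, Matrix.vecHead, Matrix.vecTail]; ring

lemma d4g (x a1 a2 a3 b1 b2 b3 : R) :
    Matrix.det !![x, a1, 0, 0;
       b1, x, a2, 0;
       0, b2, x, a3;
       0, 0, b3, x]
    = x^4 - ((a1*b1) + (a2*b2) + (a3*b3))*x^2 + ((a1*b1)*(a3*b3)) := by
  rw [Matrix.det_succ_row_zero]
  simp only [Fin.sum_univ_succ, Fin.sum_univ_zero, Matrix.cons_val', Matrix.cons_val_zero,
    Matrix.cons_val_one, Matrix.head_cons, Matrix.head_fin_const, Matrix.cons_val_succ,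
    Matrix.empty_val', Matrix.cons_val_fin_one, Matrix.head_val', Matrix.of_apply,
    mul_zero, zero_mul, add_zero, zero_add, neg_zero, neg_neg, pow_succ, pow_zero, one_mul,
    Fin.val_zero, Fin.val_succ]
  rw [show (!![x, a1, 0, 0;
       b1, x, a2, 0;
       0, b2, x, a3;
       0, 0, b3, x].submatrix Fin.succ
        (Fin.succAbove 0)) = !![x, a2, 0;
       b2, x, a3;
       0, b3, x] from by
      ext i j; fin_cases i <;> fin_cases j <;> rfl,
    show (!![x, a1, 0, 0;
       b1, x, a2, 0;
       0, b2, x, a3;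
       0, 0, b3, x].submatrix Fin.succ
        (Fin.succ 0).succAbove) = !![b1, a2, 0;
       0, x, a3;
       0, b3, x] from by
      ext i j; fin_cases i <;> fin_cases j <;> rfl,
    d3g, c3g]
  ring

lemma c4g (x b a2 a3 a4 b3 b4 : R) :
    Matrix.det !![b, a2, 0, 0;
       0, x, a3, 0;
       0, b3, x, a4;
       0, 0, b4, x]
    = b * (x^3 - ((a3*b3) + (a4*b4))*x^1) := by
  rw [Matrix.det_succ_column_zero]
  simp only [Fin.sum_univ_succ, Fin.sum_univ_zero, Matrix.cons_val', Matrix.cons_val_zero,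
    Matrix.cons_val_one, Matrix.head_cons, Matrix.head_fin_const, Matrix.cons_val_succ,
    Matrix.empty_val', Matrix.cons_val_fin_one, Matrix.head_val', Matrix.of_apply,
    mul_zero, zero_mul, add_zero, zero_add, neg_zero, neg_neg, pow_succ, pow_zero, one_mul,
    Fin.val_zero, Fin.val_succ]
  rw [show (!![b, a2, 0, 0;
       0, x, a3, 0;
       0, b3, x, a4;
       0, 0, b4, x].submatrix
        (Fin.succAbove 0) Fin.succ) = !![x, a3, 0;
       b3, x, a4;
       0, b4, x] from by
      ext i j; fin_cases i <;> fin_cases j <;> rfl,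
    d3g]
  ring

lemma d5g (x a1 a2 a3 a4 b1 b2 b3 b4 : R) :
    Matrix.det !![x, a1, 0, 0, 0;
       b1, x, a2, 0, 0;
       0, b2, x, a3, 0;
       0, 0, b3, x, a4;
       0, 0, 0, b4, x]
    = x^5 - ((a1*b1) + (a2*b2) + (a3*b3) + (a4*b4))*x^3 + ((a1*b1)*(a3*b3) + (a1*b1)*(a4*b4) + (a2*b2)*(a4*b4))*x^1 := by
  rw [Matrix.det_succ_row_zero]
  simp only [Fin.sum_univ_succ, Fin.sum_univ_zero, Matrix.cons_val', Matrix.cons_val_zero,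
    Matrix.cons_val_one, Matrix.head_cons, Matrix.head_fin_const, Matrix.cons_val_succ,
    Matrix.empty_val', Matrix.cons_val_fin_one, Matrix.head_val', Matrix.of_apply,
    mul_zero, zero_mul, add_zero, zero_add, neg_zero, neg_neg, pow_succ, pow_zero, one_mul,
    Fin.val_zero, Fin.val_succ]
  rw [show (!![x, a1, 0, 0, 0;
       b1, x, a2, 0, 0;
       0, b2, x, a3, 0;
       0, 0, b3, x, a4;
       0, 0, 0, b4, x].submatrix Fin.succ
        (Fin.succAbove 0)) = !![x, a2, 0, 0;
       b2, x, a3, 0;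
       0, b3, x, a4;
       0, 0, b4, x] from by
      ext i j; fin_cases i <;> fin_cases j <;> rfl,
    show (!![x, a1, 0, 0, 0;
       b1, x, a2, 0, 0;
       0, b2, x, a3, 0;
       0, 0, b3, x, a4;
       0, 0, 0, b4, x].submatrix Fin.succ
        (Fin.succ 0).succAbove) = !![b1, a2, 0, 0;
       0, x, a3, 0;
       0, b3, x, a4;
       0, 0, b4, x] from by
      ext i j; fin_cases i <;> fin_cases j <;> rfl,
    d4g, c4g]
  ring

lemma c5g (x b a2 a3 a4 a5 b3 b4 b5 : R) :
    Matrix.det !![b, a2, 0, 0, 0;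
       0, x, a3, 0, 0;
       0, b3, x, a4, 0;
       0, 0, b4, x, a5;
       0, 0, 0, b5, x]
    = b * (x^4 - ((a3*b3) + (a4*b4) + (a5*b5))*x^2 + ((a3*b3)*(a5*b5))) := by
  rw [Matrix.det_succ_column_zero]
  simp only [Fin.sum_univ_succ, Fin.sum_univ_zero, Matrix.cons_val', Matrix.cons_val_zero,
    Matrix.cons_val_one, Matrix.head_cons, Matrix.head_fin_const, Matrix.cons_val_succ,
    Matrix.empty_val', Matrix.cons_val_fin_one, Matrix.head_val', Matrix.of_apply,
    mul_zero, zero_mul, add_zero, zero_add, neg_zero, neg_neg, pow_succ, pow_zero, one_mul,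
    Fin.val_zero, Fin.val_succ]
  rw [show (!![b, a2, 0, 0, 0;
       0, x, a3, 0, 0;
       0, b3, x, a4, 0;
       0, 0, b4, x, a5;
       0, 0, 0, b5, x].submatrix
        (Fin.succAbove 0) Fin.succ) = !![x, a3, 0, 0;
       b3, x, a4, 0;
       0, b4, x, a5;
       0, 0, b5, x] from by
      ext i j; fin_cases i <;> fin_cases j <;> rfl,
    d4g]
  ring

lemma d6g (x a1 a2 a3 a4 a5 b1 b2 b3 b4 b5 : R) :
    Matrix.det !![x, a1, 0, 0, 0, 0;
       b1, x, a2, 0, 0, 0;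
       0, b2, x, a3, 0, 0;
       0, 0, b3, x, a4, 0;
       0, 0, 0, b4, x, a5;
       0, 0, 0, 0, b5, x]
    = x^6 - ((a1*b1) + (a2*b2) + (a3*b3) + (a4*b4) + (a5*b5))*x^4 + ((a1*b1)*(a3*b3) + (a1*b1)*(a4*b4) + (a1*b1)*(a5*b5) + (a2*b2)*(a4*b4) + (a2*b2)*(a5*b5) + (a3*b3)*(a5*b5))*x^2 - ((a1*b1)*(a3*b3)*(a5*b5)) := by
  rw [Matrix.det_succ_row_zero]
  simp only [Fin.sum_univ_succ, Fin.sum_univ_zero, Matrix.cons_val', Matrix.cons_val_zero,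
    Matrix.cons_val_one, Matrix.head_cons, Matrix.head_fin_const, Matrix.cons_val_succ,
    Matrix.empty_val', Matrix.cons_val_fin_one, Matrix.head_val', Matrix.of_apply,
    mul_zero, zero_mul, add_zero, zero_add, neg_zero, neg_neg, pow_succ, pow_zero, one_mul,
    Fin.val_zero, Fin.val_succ]
  rw [show (!![x, a1, 0, 0, 0, 0;
       b1, x, a2, 0, 0, 0;
       0, b2, x, a3, 0, 0;
       0, 0, b3, x, a4, 0;
       0, 0, 0, b4, x, a5;
       0, 0, 0, 0, b5, x].submatrix Fin.succ
        (Fin.succAbove 0)) = !![x, a2, 0, 0, 0;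
       b2, x, a3, 0, 0;
       0, b3, x, a4, 0;
       0, 0, b4, x, a5;
       0, 0, 0, b5, x] from by
      ext i j; fin_cases i <;> fin_cases j <;> rfl,
    show (!![x, a1, 0, 0, 0, 0;
       b1, x, a2, 0, 0, 0;
       0, b2, x, a3, 0, 0;
       0, 0, b3, x, a4, 0;
       0, 0, 0, b4, x, a5;
       0, 0, 0, 0, b5, x].submatrix Fin.succ
        (Fin.succ 0).succAbove) = !![b1, a2, 0, 0, 0;
       0, x, a3, 0, 0;
       0, b3, x, a4, 0;
       0, 0, b4, x, a5;
       0, 0, 0, b5, x] from by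
      ext i j; fin_cases i <;> fin_cases j <;> rfl,
    d5g, c5g]
  ring

lemma c6g (x b a2 a3 a4 a5 a6 b3 b4 b5 b6 : R) :
    Matrix.det !![b, a2, 0, 0, 0, 0;
       0, x, a3, 0, 0, 0;
       0, b3, x, a4, 0, 0;
       0, 0, b4, x, a5, 0;
       0, 0, 0, b5, x, a6;
       0, 0, 0, 0, b6, x]
    = b * (x^5 - ((a3*b3) + (a4*b4) + (a5*b5) + (a6*b6))*x^3 + ((a3*b3)*(a5*b5) + (a3*b3)*(a6*b6) + (a4*b4)*(a6*b6))*x^1) := by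
  rw [Matrix.det_succ_column_zero]
  simp only [Fin.sum_univ_succ, Fin.sum_univ_zero, Matrix.cons_val', Matrix.cons_val_zero,
    Matrix.cons_val_one, Matrix.head_cons, Matrix.head_fin_const, Matrix.cons_val_succ,
    Matrix.empty_val', Matrix.cons_val_fin_one, Matrix.head_val', Matrix.of_apply,
    mul_zero, zero_mul, add_zero, zero_add, neg_zero, neg_neg, pow_succ, pow_zero, one_mul,
    Fin.val_zero, Fin.val_succ]
  rw [show (!![b, a2, 0, 0, 0, 0;
       0, x, a3, 0, 0, 0;
       0, b3, x, a4, 0, 0;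
       0, 0, b4, x, a5, 0;
       0, 0, 0, b5, x, a6;
       0, 0, 0, 0, b6, x].submatrix
        (Fin.succAbove 0) Fin.succ) = !![x, a3, 0, 0, 0;
       b3, x, a4, 0, 0;
       0, b4, x, a5, 0;
       0, 0, b5, x, a6;
       0, 0, 0, b6, x] from by
      ext i j; fin_cases i <;> fin_cases j <;> rfl,
    d5g]
  ring

lemma d7g (x a1 a2 a3 a4 a5 a6 b1 b2 b3 b4 b5 b6 : R) :
    Matrix.det !![x, a1, 0, 0, 0, 0, 0;
       b1, x, a2, 0, 0, 0, 0;
       0, b2, x, a3, 0, 0, 0;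
       0, 0, b3, x, a4, 0, 0;
       0, 0, 0, b4, x, a5, 0;
       0, 0, 0, 0, b5, x, a6;
       0, 0, 0, 0, 0, b6, x]
    = x^7 - ((a1*b1) + (a2*b2) + (a3*b3) + (a4*b4) + (a5*b5) + (a6*b6))*x^5 + ((a1*b1)*(a3*b3) + (a1*b1)*(a4*b4) + (a1*b1)*(a5*b5) + (a1*b1)*(a6*b6) + (a2*b2)*(a4*b4) + (a2*b2)*(a5*b5) + (a2*b2)*(a6*b6) + (a3*b3)*(a5*b5) + (a3*b3)*(a6*b6) + (a4*b4)*(a6*b6))*x^3 - ((a1*b1)*(a3*b3)*(a5*b5) + (a1*b1)*(a3*b3)*(a6*b6) + (a1*b1)*(a4*b4)*(a6*b6) + (a2*b2)*(a4*b4)*(a6*b6))*x^1 := by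
  rw [Matrix.det_succ_row_zero]
  simp only [Fin.sum_univ_succ, Fin.sum_univ_zero, Matrix.cons_val', Matrix.cons_val_zero,
    Matrix.cons_val_one, Matrix.head_cons, Matrix.head_fin_const, Matrix.cons_val_succ,
    Matrix.empty_val', Matrix.cons_val_fin_one, Matrix.head_val', Matrix.of_apply,
    mul_zero, zero_mul, add_zero, zero_add, neg_zero, neg_neg, pow_succ, pow_zero, one_mul,
    Fin.val_zero, Fin.val_succ]
  rw [show (!![x, a1, 0, 0, 0, 0, 0;
       b1, x, a2, 0, 0, 0, 0;
       0, b2, x, a3, 0, 0, 0;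
       0, 0, b3, x, a4, 0, 0;
       0, 0, 0, b4, x, a5, 0;
       0, 0, 0, 0, b5, x, a6;
       0, 0, 0, 0, 0, b6, x].submatrix Fin.succ
        (Fin.succAbove 0)) = !![x, a2, 0, 0, 0, 0;
       b2, x, a3, 0, 0, 0;
       0, b3, x, a4, 0, 0;
       0, 0, b4, x, a5, 0;
       0, 0, 0, b5, x, a6;
       0, 0, 0, 0, b6, x] from by
      ext i j; fin_cases i <;> fin_cases j <;> rfl,
    show (!![x, a1, 0, 0, 0, 0, 0;
       b1, x, a2, 0, 0, 0, 0;
       0, b2, x, a3, 0, 0, 0;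
       0, 0, b3, x, a4, 0, 0;
       0, 0, 0, b4, x, a5, 0;
       0, 0, 0, 0, b5, x, a6;
       0, 0, 0, 0, 0, b6, x].submatrix Fin.succ
        (Fin.succ 0).succAbove) = !![b1, a2, 0, 0, 0, 0;
       0, x, a3, 0, 0, 0;
       0, b3, x, a4, 0, 0;
       0, 0, b4, x, a5, 0;
       0, 0, 0, b5, x, a6;
       0, 0, 0, 0, b6, x] from by
      ext i j; fin_cases i <;> fin_cases j <;> rfl,
    d6g, c6g]
  ring

end Aux

set_option maxHeartbeats 1000000 in
private lemma tri7_aux (u1 u2 u3 u4 u5 u6 l1 l2 l3 l4 l5 l6 : ℂ) :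
    (!![0, u1, 0, 0, 0, 0, 0;
       l1, 0, u2, 0, 0, 0, 0;
       0, l2, 0, u3, 0, 0, 0;
       0, 0, l3, 0, u4, 0, 0;
       0, 0, 0, l4, 0, u5, 0;
       0, 0, 0, 0, l5, 0, u6;
       0, 0, 0, 0, 0, l6, 0] : Matrix (Fin 7) (Fin 7) ℂ).charpoly =
    Polynomial.X ^ 7
      - Polynomial.C (u1*l1 + u2*l2 + u3*l3 + u4*l4 + u5*l5 + u6*l6) * Polynomial.X ^ 5
      + Polynomial.C (u1*l1*(u3*l3 + u4*l4 + u5*l5 + u6*l6) + u2*l2*(u4*l4 + u5*l5 + u6*l6)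
           + u3*l3*(u5*l5 + u6*l6) + u4*l4*(u6*l6)) * Polynomial.X ^ 3
      - Polynomial.C ((u1*l1)*(u3*l3)*(u5*l5) + (u1*l1)*(u3*l3)*(u6*l6)
           + (u1*l1)*(u4*l4)*(u6*l6) + (u2*l2)*(u4*l4)*(u6*l6)) * Polynomial.X := by
  rw [Matrix.charpoly]
  have h : Matrix.charmatrix (!![0, u1, 0, 0, 0, 0, 0;
       l1, 0, u2, 0, 0, 0, 0;
       0, l2, 0, u3, 0, 0, 0;
       0, 0, l3, 0, u4, 0, 0;
       0, 0, 0, l4, 0, u5, 0;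
       0, 0, 0, 0, l5, 0, u6;
       0, 0, 0, 0, 0, l6, 0] : Matrix (Fin 7) (Fin 7) ℂ) =
      !![Polynomial.X, -Polynomial.C u1, 0, 0, 0, 0, 0;
       -Polynomial.C l1, Polynomial.X, -Polynomial.C u2, 0, 0, 0, 0;
       0, -Polynomial.C l2, Polynomial.X, -Polynomial.C u3, 0, 0, 0;
       0, 0, -Polynomial.C l3, Polynomial.X, -Polynomial.C u4, 0, 0;
       0, 0, 0, -Polynomial.C l4, Polynomial.X, -Polynomial.C u5, 0;
       0, 0, 0, 0, -Polynomial.C l5, Polynomial.X, -Polynomial.C u6;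
       0, 0, 0, 0, 0, -Polynomial.C l6, Polynomial.X] := by
    ext i j
    fin_cases i <;> fin_cases j <;>
      simp (config := { decide := true }) [Matrix.charmatrix_apply,
        show (5 : Fin 7) = Fin.succ 4 from rfl,
        show (6 : Fin 7) = Fin.succ 5 from rfl, Matrix.cons_val_succ,
        show (5 : Fin 6) = Fin.succ 4 from rfl, Matrix.cons_val_four,
        Matrix.vecHead, Matrix.vecTail, Matrix.diagonal_apply]
  rw [h, d7g]
  simp only [map_add, map_mul, map_neg, neg_neg, neg_mul, mul_neg]
  ring

/-- The matrix `Ψ` associated to `a, b ∈ ℂ` (the pencil of a cyclic `G₂'`-Higgs bundle in a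
unitary cross-product basis). -/
def PsiMat (a b : ℂ) : Matrix (Fin 7) (Fin 7) ℂ :=
  !![0, starRingEnd ℂ b, 0, 0, 0, 0, 0;
     b, 0, starRingEnd ℂ a, 0, 0, 0, 0;
     0, a, 0, (Real.sqrt 2 : ℂ) * Complex.I * starRingEnd ℂ b, 0, 0, 0;
     0, 0, -((Real.sqrt 2 : ℂ) * Complex.I * b), 0,
       (Real.sqrt 2 : ℂ) * Complex.I * starRingEnd ℂ b, 0, 0;
     0, 0, 0, -((Real.sqrt 2 : ℂ) * Complex.I * b), 0, starRingEnd ℂ a, 0;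
     0, 0, 0, 0, a, 0, starRingEnd ℂ b;
     0, 0, 0, 0, 0, b, 0]

set_option maxHeartbeats 1000000 in
/-- The characteristic polynomial of `Ψ` is
`X⁷ − A X⁵ + (A²/4) X³ − C X` with `A = 2(|a|² + 3|b|²)` and `C = 4|b|⁴(|a|² + |b|²)`;
for `(a,b) ≠ (0,0)` the invariant `54C/A³` equals `27(|a|²|b|⁴ + |b|⁶)/(|a|² + 3|b|²)³`,
and it equals `1` iff `a = 0`. -/
theorem charpoly_invariant (a b : ℂ) :
    (PsiMat a b).charpoly =
      Polynomial.X ^ 7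
        - Polynomial.C ((2 * (‖a‖ ^ 2 + 3 * ‖b‖ ^ 2) : ℝ) : ℂ)
            * Polynomial.X ^ 5
        + Polynomial.C (((2 * (‖a‖ ^ 2 + 3 * ‖b‖ ^ 2)) ^ 2 / 4 : ℝ) : ℂ)
            * Polynomial.X ^ 3
        - Polynomial.C ((4 * ‖b‖ ^ 4 * (‖a‖ ^ 2 + ‖b‖ ^ 2) : ℝ) : ℂ)
            * Polynomial.X ∧
    ((a, b) ≠ (0, 0) →
      54 * (4 * ‖b‖ ^ 4 * (‖a‖ ^ 2 + ‖b‖ ^ 2))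
          / (2 * (‖a‖ ^ 2 + 3 * ‖b‖ ^ 2)) ^ 3
        = 27 * (‖a‖ ^ 2 * ‖b‖ ^ 4 + ‖b‖ ^ 6)
          / (‖a‖ ^ 2 + 3 * ‖b‖ ^ 2) ^ 3 ∧
      (54 * (4 * ‖b‖ ^ 4 * (‖a‖ ^ 2 + ‖b‖ ^ 2))
          / (2 * (‖a‖ ^ 2 + 3 * ‖b‖ ^ 2)) ^ 3 = 1 ↔ a = 0)) := by
  constructor
  · -- the characteristic polynomial computation
    have hb : starRingEnd ℂ b * b = ((‖b‖ ^ 2 : ℝ) : ℂ) := by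
      rw [mul_comm, Complex.mul_conj, Complex.normSq_eq_norm_sq]
    have ha : starRingEnd ℂ a * a = ((‖a‖ ^ 2 : ℝ) : ℂ) := by
      rw [mul_comm, Complex.mul_conj, Complex.normSq_eq_norm_sq]
    have hs : ((Real.sqrt 2 : ℝ) : ℂ) ^ 2 = 2 := by
      rw [← Complex.ofReal_pow, Real.sq_sqrt (by norm_num : (0:ℝ) ≤ 2)]; norm_num
    have h3 : (Real.sqrt 2 : ℂ) * Complex.I * starRingEnd ℂ b *
        -((Real.sqrt 2 : ℂ) * Complex.I * b) = ((2 * ‖b‖ ^ 2 : ℝ) : ℂ) := by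
      push_cast at hb ⊢
      linear_combination (-(Complex.I ^ 2) * (starRingEnd ℂ b * b)) * hs
        + (-2 * (starRingEnd ℂ b * b)) * Complex.I_sq + 2 * hb
    unfold PsiMat
    rw [tri7_aux, hb, ha, h3]
    push_cast
    ring
  · -- the invariant computation
    intro h
    set x := ‖a‖ with hxdef
    set y := ‖b‖ with hydef
    have hx : 0 ≤ x := norm_nonneg a
    have hy : 0 ≤ y := norm_nonneg b
    have hne : a ≠ 0 ∨ b ≠ 0 := by
      by_contra hc
      push_neg at hc
      exact h (by simp [hc.1, hc.2])
    have hd : 0 < x ^ 2 + 3 * y ^ 2 := by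
      rcases hne with h1 | h1
      · have : 0 < x := norm_pos_iff.mpr h1
        nlinarith
      · have : 0 < y := norm_pos_iff.mpr h1
        nlinarith
    have hd' : (x ^ 2 + 3 * y ^ 2) ≠ 0 := ne_of_gt hd
    have heq : 54 * (4 * y ^ 4 * (x ^ 2 + y ^ 2)) / (2 * (x ^ 2 + 3 * y ^ 2)) ^ 3
        = 27 * (x ^ 2 * y ^ 4 + y ^ 6) / (x ^ 2 + 3 * y ^ 2) ^ 3 := by
      field_simp
      ring
    refine ⟨heq, ?_⟩
    rw [heq]
    constructor
    · intro h1
      rw [div_eq_one_iff_eq (by positivity)] at h1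
      have h2 : x ^ 4 * (x ^ 2 + 9 * y ^ 2) = 0 := by nlinarith [h1]
      have hx0 : x = 0 := by
        by_contra hxn
        have hxp : 0 < x := lt_of_le_of_ne hx (Ne.symm hxn)
        have : 0 < x ^ 4 * (x ^ 2 + 9 * y ^ 2) := by positivity
        linarith
      exact norm_eq_zero.mp hx0
    · intro h1
      have hb0 : b ≠ 0 := by
        rcases hne with h2 | h2
        · exact absurd h1 h2
        · exact h2
      have hy0 : 0 < y := norm_pos_iff.mpr hb0
      rw [h1] at hxdef
      simp at hxdef
      rw [hxdef]
      field_simp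
      ring
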